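/- arXiv:2411.17405 — 2 statements merged into one kernel-verified Lean document; each statement's English description precedes it below -/
import Mathlib

section
/- (Uniform positive definiteness of the two-dimensional elasticity tensor.) There exists a constant c_e = c_e(ω, θ, λ, μ) > 0 such that for every y ∈ ω̄ and every symmetric 2×2 real matrix (t_{αβ}), c_e · Σ_{α,β} |t_{αβ}|² ≤ a^{αβστ}(y) t_{στ} t_{αβ}, where a^{αβστ} := (4λμ/(λ+2μ)) a^{αβ} a^{στ} + 2μ (a^{ασ} a^{βτ} + a^{ατ} a^{βσ}). -/
open MeasureTheory Real


noncomputable section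

/-- The plane `ℝ²` with its Euclidean structure. -/
abbrev E2 := EuclideanSpace ℝ (Fin 2)

/-- The space `ℝ³` with its Euclidean structure. -/
abbrev E3 := EuclideanSpace ℝ (Fin 3)

/-- Partial derivative `∂_α` of a scalar field on `ℝ²`. -/
def pd (α : Fin 2) (u : E2 → ℝ) (y : E2) : ℝ :=
  fderiv ℝ u y (EuclideanSpace.single α (1:ℝ))

/-- Partial derivative `∂_α` of an `ℝ³`-valued field on `ℝ²`. -/
def pdv (α : Fin 2) (u : E2 → E3) (y : E2) : E3 :=
  fderiv ℝ u y (EuclideanSpace.single α (1:ℝ))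

/-- Euclidean inner product on `ℝ³`. -/
def dot3 (u v : E3) : ℝ := ∑ i : Fin 3, u i * v i

/-- Cross (vector) product on `ℝ³`. -/
def cross3 (u v : E3) : E3 :=
  (WithLp.equiv 2 (Fin 3 → ℝ)).symm
    ![u 1 * v 2 - u 2 * v 1, u 2 * v 0 - u 0 * v 2, u 0 * v 1 - u 1 * v 0]

/-- Covariant basis vectors `a_α := ∂_α θ`. -/
def acov (θ : E2 → E3) (α : Fin 2) (y : E2) : E3 := pdv α θ y

/-- The unit normal vector field `a₃ := (a₁ ∧ a₂)/|a₁ ∧ a₂|`. -/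
def a3 (θ : E2 → E3) (y : E2) : E3 :=
  ‖cross3 (acov θ 0 y) (acov θ 1 y)‖⁻¹ • cross3 (acov θ 0 y) (acov θ 1 y)

/-- Covariant components `a_{αβ}` of the first fundamental form. -/
def afirst (θ : E2 → E3) (y : E2) : Matrix (Fin 2) (Fin 2) ℝ :=
  Matrix.of fun α β => dot3 (acov θ α y) (acov θ β y)

/-- Contravariant components `a^{αβ}`, the inverse matrix of `(a_{αβ})`. -/
def ainv (θ : E2 → E3) (y : E2) : Matrix (Fin 2) (Fin 2) ℝ := (afirst θ y)⁻¹

/-- Tangential contravariant basis vectors `a^σ = a^{στ} a_τ`. -/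
def acontra (θ : E2 → E3) (σ : Fin 2) (y : E2) : E3 :=
  ∑ τ : Fin 2, ainv θ y σ τ • acov θ τ y

/-- Covariant components of the second fundamental form, `b_{αβ} := a₃ ⋅ ∂_α a_β`. -/
def bcov (θ : E2 → E3) (α β : Fin 2) (y : E2) : ℝ :=
  dot3 (a3 θ y) (pdv α (acov θ β) y)

/-- Mixed components of the second fundamental form, `b^α_β := a^{ασ} b_{σβ}`. -/
def bmix (θ : E2 → E3) (α β : Fin 2) (y : E2) : ℝ :=
  ∑ σ : Fin 2, ainv θ y α σ * bcov θ σ β y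

/-- Christoffel symbols `Γ^σ_{αβ} := a^σ ⋅ ∂_β a_α`. -/
def Γs (θ : E2 → E3) (σ α β : Fin 2) (y : E2) : ℝ :=
  dot3 (acontra θ σ y) (pdv β (acov θ α) y)

/-- `θ` is an immersion on `s`: `a₁(y), a₂(y)` are linearly independent for `y ∈ s`. -/
def IsImmersionOn (θ : E2 → E3) (s : Set E2) : Prop :=
  ∀ y ∈ s, LinearIndependent ℝ ![acov θ 0 y, acov θ 1 y]

/-- The `L²(ω)` norm. -/
def L2 (ω : Set E2) (u : E2 → ℝ) : ℝ := Real.sqrt (∫ y in ω, u y ^ 2)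

/-- The `L⁴(ω)` norm. -/
def L4 (ω : Set E2) (u : E2 → ℝ) : ℝ := (∫ y in ω, u y ^ 4) ^ ((1:ℝ)/4)

/-- The `W^{1,2}(ω)` norm. -/
def W12 (ω : Set E2) (u : E2 → ℝ) : ℝ :=
  Real.sqrt (L2 ω u ^ 2 + ∑ α : Fin 2, L2 ω (pd α u) ^ 2)

/-- The `W^{2,2}(ω)` norm. -/
def W22 (ω : Set E2) (u : E2 → ℝ) : ℝ :=
  Real.sqrt (W12 ω u ^ 2 +
    ∑ α : Fin 2, ∑ β : Fin 2, L2 ω (fun y => pd α (fun x => pd β u x) y) ^ 2)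

/-- Covariant components of the linearized change of metric tensor `γ_{αβ}(η)`,
for a displacement field with components `v 0, v 1` (tangential) and `v 2` (normal). -/
def γlin (θ : E2 → E3) (v : Fin 3 → E2 → ℝ) (α β : Fin 2) (y : E2) : ℝ :=
  (pd α (v β.castSucc) y + pd β (v α.castSucc) y) / 2
    - ∑ σ : Fin 2, Γs θ σ α β y * v σ.castSucc y
    - bcov θ α β y * v 2 y

/-- The rotation-type fields `φ_β(η) := ∂_β η₃ − b^σ_β η_σ`. -/
def φrot (θ : E2 → E3) (v : Fin 3 → E2 → ℝ) (β : Fin 2) (y : E2) : ℝ :=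
  pd β (v 2) y - ∑ σ : Fin 2, bmix θ σ β y * v σ.castSucc y

/-- Modified change of metric tensor `G^{BS}_{αβ}(η) := γ_{αβ}(η) + ½ φ_α(η) φ_β(η)`. -/
def GBS (θ : E2 → E3) (v : Fin 3 → E2 → ℝ) (α β : Fin 2) (y : E2) : ℝ :=
  γlin θ v α β y + (φrot θ v α y * φrot θ v β y) / 2

/-- Modified linearized change of curvature tensor `ρ^{BS}_{αβ}(η)`. -/
def ρBS (θ : E2 → E3) (v : Fin 3 → E2 → ℝ) (α β : Fin 2) (y : E2) : ℝ :=
  ((pd β (φrot θ v α) y - ∑ τ : Fin 2, Γs θ τ α β y * φrot θ v τ y)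
    + (pd α (φrot θ v β) y - ∑ τ : Fin 2, Γs θ τ β α y * φrot θ v τ y)) / 2

/-- Smooth and compactly supported inside `ω`. -/
def SmoothCptIn (ω : Set E2) (u : E2 → ℝ) : Prop :=
  ContDiff ℝ (⊤ : ℕ∞) u ∧ HasCompactSupport u ∧ tsupport u ⊆ ω

end

section AuxProof

theorem aux_abs' (T d X : ℝ) (hT : 0 ≤ T) (h : 4*d^2*X^2 ≤ T^2) :
    d * X ≤ T := by
  rcases le_or_gt (d*X) 0 with h1 | h1
  · linarith
  · nlinarith [sq_nonneg (T - 2*d*X)]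

theorem key_quad (a b c p q r : ℝ) (hc : 0 < c) (hd : 0 < a*c - b^2) :
    (p^2+2*q^2+r^2) * (a*c-b^2)^2 ≤
    (a+c)^2 * ((c*p-b*q)^2 + 2*(c*q-b*r)*(a*q-b*p) + (a*r-b*q)^2) := by
  set d := a*c - b^2 with hdd
  set T : ℝ := (c^2+b^2)*(p^2+q^2) - 2*b*(a+c)*q*(p+r) + (a^2+b^2)*(q^2+r^2) with hT
  set w : ℝ := (c^2+b^2)*p - 2*b*(a+c)*q + (a^2+b^2)*r with hw
  have hcb : (0:ℝ) < c^2 + b^2 := by positivity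
  have hTnn : 0 ≤ T := by
    have hid : (c^2+b^2)*T = ((c^2+b^2)*p - b*(a+c)*q)^2 + d^2*q^2
        + ((c^2+b^2)*q - b*(a+c)*r)^2 + d^2*r^2 := by rw [hT, hdd]; ring
    have h0 : (c^2+b^2)*0 ≤ (c^2+b^2)*T := by rw [mul_zero, hid]; positivity
    exact le_of_mul_le_mul_left h0 hcb
  have hI2 : 4*d^2*(p*r-q^2)^2 ≤ T^2 := by
    have hid : T^2 - 4*d^2*(p*r-q^2)^2 =
        (((p*(c^2+b^2)+q*(-b*(a+c)))*p+(p*(-b*(a+c))+q*(a^2+b^2))*q)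
          - ((q*(c^2+b^2)+r*(-b*(a+c)))*q+(q*(-b*(a+c))+r*(a^2+b^2))*r))^2
        + 4*((p*(c^2+b^2)+q*(-b*(a+c)))*q+(p*(-b*(a+c))+q*(a^2+b^2))*r)^2 := by
      rw [hT, hdd]; ring
    linarith [sq_nonneg (((p*(c^2+b^2)+q*(-b*(a+c)))*p+(p*(-b*(a+c))+q*(a^2+b^2))*q)
          - ((q*(c^2+b^2)+r*(-b*(a+c)))*q+(q*(-b*(a+c))+r*(a^2+b^2))*r)),
      sq_nonneg ((p*(c^2+b^2)+q*(-b*(a+c)))*q+(p*(-b*(a+c))+q*(a^2+b^2))*r)]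
  have hTd : d*(p*r - q^2) ≤ T := aux_abs' T d _ hTnn hI2
  have hI1 : (a+c)^2 * ((c*p-b*q)^2 + 2*(c*q-b*r)*(a*q-b*p) + (a*r-b*q)^2)
      = w^2 + 2*d*T + d^2*((p-r)^2+4*q^2) := by rw [hw, hT, hdd]; ring
  have hN : (p^2+2*q^2+r^2) * d^2 = d^2*((p-r)^2+4*q^2) + 2*d*(d*(p*r-q^2)) := by ring
  have h2 : 2*d*(d*(p*r-q^2)) ≤ 2*d*T :=
    mul_le_mul_of_nonneg_left hTd (by linarith)
  have hw2 : 0 ≤ w^2 := sq_nonneg w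
  linarith

theorem dot3_self_pos (v : E3) (hv : v ≠ 0) : 0 < dot3 v v := by
  have hex : ∃ i, v i ≠ 0 := by
    by_contra h
    push_neg at h
    exact hv (by ext i; simp [h i])
  obtain ⟨i, hi⟩ := hex
  refine Finset.sum_pos' (fun j _ => mul_self_nonneg _) ⟨i, Finset.mem_univ i, ?_⟩
  exact mul_self_pos.mpr hi

theorem gram_facts (x y : E3) (h : LinearIndependent ℝ ![x, y]) :
    0 < dot3 x x ∧ 0 < dot3 y y ∧ 0 < dot3 x x * dot3 y y - dot3 x y ^ 2 := by
  have hx : x ≠ 0 := by simpa using h.ne_zero 0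
  have hy : y ≠ 0 := by simpa using h.ne_zero 1
  have ha := dot3_self_pos x hx
  have hcy := dot3_self_pos y hy
  refine ⟨ha, hcy, ?_⟩
  set a := dot3 x x with haa
  set b := dot3 x y with hbb
  have hv : (-b) • x + a • y ≠ 0 := by
    intro h0
    obtain ⟨-, h2⟩ := LinearIndependent.pair_iff.mp h (-b) a h0
    exact ha.ne' h2
  have hvv : dot3 ((-b) • x + a • y) ((-b) • x + a • y)
      = a * (a * dot3 y y - b^2) := by
    simp only [haa, hbb, dot3, PiLp.add_apply, PiLp.smul_apply, smul_eq_mul,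
      Fin.sum_univ_three]
    ring
  have hpos := dot3_self_pos _ hv
  rw [hvv] at hpos
  nlinarith [hpos, ha]

end AuxProof

set_option maxHeartbeats 1000000 in
/-- (Uniform positive definiteness of the two-dimensional elasticity tensor.)
There is `c_e = c_e(ω, θ, λ, μ) > 0` such that for all `y ∈ ω̄` and all symmetric 2×2
matrices `(t_{αβ})`: `c_e Σ_{α,β} |t_{αβ}|² ≤ a^{αβστ}(y) t_{στ} t_{αβ}`. -/
theorem elasticity_tensor_uniformly_positive_definite
    (ω : Set E2) (hω : IsOpen ω) (hbd : Bornology.IsBounded ω) (hconn : IsConnected ω)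
    (θ : E2 → E3) (hθ : ContDiff ℝ 2 θ) (himm : IsImmersionOn θ (closure ω))
    (lam mu : ℝ) (hlam : 0 ≤ lam) (hmu : 0 < mu) :
    ∃ c : ℝ, 0 < c ∧ ∀ y ∈ closure ω, ∀ t : Matrix (Fin 2) (Fin 2) ℝ, t.IsSymm →
      c * ∑ α : Fin 2, ∑ β : Fin 2, |t α β| ^ 2 ≤
        ∑ α : Fin 2, ∑ β : Fin 2, ∑ σ : Fin 2, ∑ τ : Fin 2,
          ((4 * lam * mu / (lam + 2 * mu)) * ainv θ y α β * ainv θ y σ τ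
            + 2 * mu * (ainv θ y α σ * ainv θ y β τ + ainv θ y α τ * ainv θ y β σ))
            * t σ τ * t α β := by
  classical
  -- continuity of the entries of the first fundamental form
  have hfd : Continuous fun y => fderiv ℝ θ y := hθ.continuous_fderiv (by norm_num)
  have hac : ∀ γ : Fin 2, Continuous fun y => acov θ γ y := by
    intro γ
    simpa [acov, pdv] using hfd.clm_apply continuous_const
  have hcont : Continuous fun y => afirst θ y 0 0 + afirst θ y 1 1 := by
    have h1 : ∀ γ : Fin 2, Continuous fun y => dot3 (acov θ γ y) (acov θ γ y) := by
      intro γ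
      unfold dot3
      exact continuous_finset_sum _ fun i _ =>
        ((EuclideanSpace.proj i).continuous.comp (hac γ)).mul
          ((EuclideanSpace.proj i).continuous.comp (hac γ))
    exact (h1 0).add (h1 1)
  -- pointwise facts
  have hpt : ∀ y ∈ closure ω, 0 < afirst θ y 0 0 ∧ 0 < afirst θ y 1 1 ∧
      0 < afirst θ y 0 0 * afirst θ y 1 1 - afirst θ y 0 1 ^ 2 ∧
      afirst θ y 1 0 = afirst θ y 0 1 := by
    intro y hy
    obtain ⟨h1, h2, h3⟩ := gram_facts (acov θ 0 y) (acov θ 1 y) (himm y hy)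
    refine ⟨by simpa [afirst] using h1, by simpa [afirst] using h2,
      by simpa [afirst] using h3, ?_⟩
    simp only [afirst, Matrix.of_apply, dot3]
    exact Finset.sum_congr rfl fun i _ => mul_comm _ _
  -- the uniform bound
  have hcomp : IsCompact (closure ω) := hbd.isCompact_closure
  have hne : (closure ω).Nonempty := hconn.nonempty.closure
  obtain ⟨y₀, hy₀, hmax⟩ := hcomp.exists_isMaxOn hne hcont.continuousOn
  set M := afirst θ y₀ 0 0 + afirst θ y₀ 1 1 with hMdef
  have hMpos : 0 < M := by
    obtain ⟨h1, h2, -, -⟩ := hpt y₀ hy₀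
    rw [hMdef]; linarith
  refine ⟨4 * mu / M ^ 2, by positivity, ?_⟩
  intro y hy t ht
  obtain ⟨ha, hc, hd, hba⟩ := hpt y hy
  set a := afirst θ y 0 0 with ha'
  set b := afirst θ y 0 1 with hb'
  set c := afirst θ y 1 1 with hc'
  have hMy : a + c ≤ M := hmax hy
  have hdet : (afirst θ y).det = a * c - b ^ 2 := by
    rw [Matrix.det_fin_two, hba]; ring
  have hinv : ainv θ y = (a * c - b ^ 2)⁻¹ • !![c, -b; -b, a] := by
    unfold ainv
    rw [Matrix.inv_def, hdet, Ring.inverse_eq_inv, Matrix.adjugate_fin_two, hba]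
  have e00 : ainv θ y 0 0 = (a * c - b ^ 2)⁻¹ * c := by rw [hinv]; simp
  have e01 : ainv θ y 0 1 = (a * c - b ^ 2)⁻¹ * (-b) := by rw [hinv]; simp
  have e10 : ainv θ y 1 0 = (a * c - b ^ 2)⁻¹ * (-b) := by rw [hinv]; simp
  have e11 : ainv θ y 1 1 = (a * c - b ^ 2)⁻¹ * a := by rw [hinv]; simp
  have hsym : t 1 0 = t 0 1 := ht.apply 0 1
  set p := t 0 0 with hp'
  set q := t 0 1 with hq'
  set r := t 1 1 with hr'
  set D := a * c - b ^ 2 with hD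
  have hkey := key_quad a b c p q r hc hd
  rw [← hD] at hkey
  set Q : ℝ := (c*p-b*q)^2 + 2*(c*q-b*r)*(a*q-b*p) + (a*r-b*q)^2 with hQdef
  clear_value a b c p q r D Q M
  have hQnn : 0 ≤ Q := by
    have h0 : (a+c)^2 * 0 ≤ (a+c)^2 * Q := by
      rw [mul_zero]
      refine le_trans ?_ hkey
      positivity
    exact le_of_mul_le_mul_left h0 (by positivity)
  have hM2 : (0:ℝ) < M ^ 2 := by positivity
  have hD2 : (0:ℝ) < D ^ 2 := by positivity
  have hMQ : (p^2+2*q^2+r^2) * D^2 ≤ Q * M^2 := by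
    have h1 : (a+c)^2 * Q ≤ M^2 * Q := by
      have h2 : (a+c)^2 ≤ M^2 := by nlinarith [ha, hc, hMy]
      exact mul_le_mul_of_nonneg_right h2 hQnn
    linarith [hkey, h1]
  have hdiv : (p^2+2*q^2+r^2) / M^2 ≤ Q / D^2 := (div_le_div_iff₀ hM2 hD2).mpr hMQ
  have h1 : 4*mu/M^2 * (p^2 + q^2 + (q^2 + r^2)) ≤ 4*mu*(D⁻¹^2*Q) := by
    calc 4*mu/M^2 * (p^2 + q^2 + (q^2 + r^2)) = 4*mu*((p^2+2*q^2+r^2) / M^2) := by ring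
    _ ≤ 4*mu*(Q / D^2) := by
        exact mul_le_mul_of_nonneg_left hdiv (by positivity)
    _ = 4*mu*(D⁻¹^2*Q) := by ring
  have h2 : 0 ≤ 4*lam*mu/(lam+2*mu) * (D⁻¹*(c*p - 2*b*q + a*r))^2 := by positivity
  have hL : (∑ α : Fin 2, ∑ β : Fin 2, |t α β| ^ 2) = p^2 + q^2 + (q^2 + r^2) := by
    simp only [Fin.sum_univ_two, sq_abs]
    rw [hsym, ← hp', ← hq', ← hr']
  have hEq : (∑ α : Fin 2, ∑ β : Fin 2, ∑ σ : Fin 2, ∑ τ : Fin 2,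
          ((4 * lam * mu / (lam + 2 * mu)) * ainv θ y α β * ainv θ y σ τ
            + 2 * mu * (ainv θ y α σ * ainv θ y β τ + ainv θ y α τ * ainv θ y β σ))
            * t σ τ * t α β)
      = 4*lam*mu/(lam+2*mu) * (D⁻¹*(c*p - 2*b*q + a*r))^2 + 4*mu*(D⁻¹^2*Q) := by
    simp only [Fin.sum_univ_two]
    rw [hsym, e00, e01, e10, e11, ← hp', ← hq', ← hr', hQdef]
    ring
  rw [hL, hEq]
  linarith [h1, h2]
end

section
/- (Pointwise coercivity of the elasticity tensor with explicit constant.) Let A = (A^{αβ}) be a symmetric positive definite 2×2 real matrix and suppose μ₀ > 0 is such that xᵀAx ≥ μ₀|x|² for all x ∈ ℝ². Let λ ≥ 0 and μ > 0 and define a^{αβστ} := (4λμ/(λ+2μ)) A^{αβ} A^{στ} + 2μ (A^{ασ} A^{βτ} + A^{ατ} A^{βσ}). Then for every symmetric 2×2 real matrix (t_{αβ}), a^{αβστ} t_{στ} t_{αβ} ≥ 4μ μ₀² Σ_{α,β} |t_{αβ}|². -/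
open MeasureTheory Real


private theorem tr_psd' (m1 m2 m3 n1 n2 n3 : ℝ) (hm1 : 0 ≤ m1) (hm3 : 0 ≤ m3)
    (hm : m2^2 ≤ m1*m3) (hn1 : 0 ≤ n1) (hn3 : 0 ≤ n3) (hn : n2^2 ≤ n1*n3) :
    0 ≤ m1*n1 + 2*m2*n2 + m3*n3 := by
  nlinarith [mul_nonneg hm1 hn1, mul_nonneg hm3 hn3,
    mul_nonneg (sub_nonneg.2 hm) (mul_nonneg hn1 hn3),
    mul_nonneg (sq_nonneg m2) (sub_nonneg.2 hn),
    sq_nonneg (m1*n1 - m3*n3)]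

private theorem q2_psd' (α b γ p q r : ℝ) (hα : 0 ≤ α) (hγ : 0 ≤ γ) (hd : b^2 ≤ α*γ)
    (hp : 0 ≤ p) (hr : 0 ≤ r) (hD : q^2 ≤ p*r) :
    0 ≤ (α*p + b*q)^2 + (b*q + γ*r)^2 + 2*(α*q + b*r)*(b*p + γ*q) := by
  have hm1 : 0 ≤ p*α^2 + 2*q*(α*b) + r*b^2 :=
    tr_psd' p q r (α^2) (α*b) (b^2) hp hr hD (sq_nonneg α) (sq_nonneg b) (le_of_eq (by ring))
  have hm3 : 0 ≤ p*b^2 + 2*q*(b*γ) + r*γ^2 :=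
    tr_psd' p q r (b^2) (b*γ) (γ^2) hp hr hD (sq_nonneg b) (sq_nonneg γ) (le_of_eq (by ring))
  have hdet : ((α*b*p + b^2*q + α*γ*q + b*γ*r))^2 ≤
      (p*α^2 + 2*q*(α*b) + r*b^2) * (p*b^2 + 2*q*(b*γ) + r*γ^2) := by
    nlinarith [mul_nonneg (sq_nonneg (α*γ - b^2)) (sub_nonneg.2 hD)]
  have := tr_psd' (p*α^2 + 2*q*(α*b) + r*b^2) (α*b*p + b^2*q + α*γ*q + b*γ*r)
    (p*b^2 + 2*q*(b*γ) + r*γ^2) p q r hm1 hm3 hdet hp hr hD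
  nlinarith [this]

private theorem q2_nonneg' (α b γ p q r : ℝ) (hα : 0 ≤ α) (hγ : 0 ≤ γ) (hd : b^2 ≤ α*γ) :
    0 ≤ (α*p + b*q)^2 + (b*q + γ*r)^2 + 2*(α*q + b*r)*(b*p + γ*q) := by
  rcases le_or_gt (q^2) (p*r) with hD | hD
  · rcases le_or_gt 0 p with hp | hp <;> rcases le_or_gt 0 r with hr | hr
    · exact q2_psd' α b γ p q r hα hγ hd hp hr hD
    · have hq : q = 0 := by nlinarith [sq_nonneg q, mul_nonneg hp (neg_nonneg.2 hr.le)]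
      have hp0 : p = 0 := by nlinarith [sq_nonneg q, mul_nonneg hp (neg_nonneg.2 hr.le)]
      subst hq hp0; nlinarith [sq_nonneg (γ*r), sq_nonneg (b*r)]
    · have hq : q = 0 := by nlinarith [sq_nonneg q, mul_nonneg (neg_nonneg.2 hp.le) hr]
      have hr0 : r = 0 := by nlinarith [sq_nonneg q, mul_nonneg (neg_nonneg.2 hp.le) hr]
      subst hq hr0; nlinarith [sq_nonneg (α*p), sq_nonneg (b*p)]
    · have := q2_psd' α b γ (-p) (-q) (-r) hα hγ hd (by linarith) (by linarith)
        (by nlinarith)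
      nlinarith [this]
  · nlinarith [sq_nonneg (α*p + 2*b*q + γ*r),
      mul_nonneg (sub_nonneg.2 hd) (le_of_lt (sub_pos.2 hD))]

private theorem key_pointwise (μ₀ α γ b p q r : ℝ) (hμ₀ : 0 < μ₀) (hα : 0 ≤ α) (hγ : 0 ≤ γ)
    (hd : b^2 ≤ α*γ) :
    μ₀^2 * (p^2 + 2*q^2 + r^2) ≤
      ((μ₀+α)*p + b*q)^2 + (b*q + (μ₀+γ)*r)^2 + 2*((μ₀+α)*q + b*r)*(b*p + (μ₀+γ)*q) := by
  have hQ1 : 0 ≤ α*(p^2+q^2) + 2*b*(p*q+q*r) + γ*(q^2+r^2) :=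
    tr_psd' α b γ (p^2+q^2) (p*q+q*r) (q^2+r^2) hα hγ hd (by positivity) (by positivity)
      (by nlinarith [sq_nonneg (p*r - q^2)])
  have hQ2 := q2_nonneg' α b γ p q r hα hγ hd
  nlinarith [mul_nonneg hμ₀.le hQ1, hQ2]

/-- (Pointwise coercivity of the elasticity tensor with explicit constant.)
If `A` is symmetric positive definite with `xᵀAx ≥ μ₀|x|²`, `λ ≥ 0`, `μ > 0`, then for every
symmetric `t`: `a^{αβστ} t_{στ} t_{αβ} ≥ 4 μ μ₀² Σ_{α,β} |t_{αβ}|²`. -/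
theorem elasticity_tensor_pointwise_coercive
    (A : Matrix (Fin 2) (Fin 2) ℝ) (hA : A.PosDef) (μ₀ : ℝ) (hμ₀ : 0 < μ₀)
    (hAbound : ∀ x : Fin 2 → ℝ,
      μ₀ * ∑ i : Fin 2, |x i| ^ 2 ≤ ∑ α : Fin 2, ∑ β : Fin 2, x α * A α β * x β)
    (lam mu : ℝ) (hlam : 0 ≤ lam) (hmu : 0 < mu) :
    ∀ t : Matrix (Fin 2) (Fin 2) ℝ, t.IsSymm →
      4 * mu * μ₀ ^ 2 * ∑ α : Fin 2, ∑ β : Fin 2, |t α β| ^ 2 ≤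
        ∑ α : Fin 2, ∑ β : Fin 2, ∑ σ : Fin 2, ∑ τ : Fin 2,
          ((4 * lam * mu / (lam + 2 * mu)) * A α β * A σ τ
            + 2 * mu * (A α σ * A β τ + A α τ * A β σ)) * t σ τ * t α β := by
  intro t ht
  have hAsymm : A 1 0 = A 0 1 := by
    have := hA.isHermitian
    have h := congrFun (congrFun this.eq 0) 1
    simpa [Matrix.conjTranspose_apply] using h
  have htsymm : t 1 0 = t 0 1 := by
    have h := congrFun (congrFun ht.eq 0) 1
    simpa [Matrix.transpose_apply] using h
  -- quadratic form hypothesis in scalar form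
  have hq : ∀ x y : ℝ, 0 ≤ (A 0 0 - μ₀) * x^2 + 2 * (A 0 1) * (x*y) + (A 1 1 - μ₀) * y^2 := by
    intro x y
    have h := hAbound ![x, y]
    simp only [Fin.sum_univ_two, Matrix.cons_val_zero, Matrix.cons_val_one, Matrix.head_cons,
      sq_abs] at h
    rw [hAsymm] at h
    nlinarith [h]
  have hα : 0 ≤ A 0 0 - μ₀ := by have := hq 1 0; nlinarith
  have hγ : 0 ≤ A 1 1 - μ₀ := by have := hq 0 1; nlinarith
  have hb : (A 0 1)^2 ≤ (A 0 0 - μ₀) * (A 1 1 - μ₀) := by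
    set α := A 0 0 - μ₀
    set γ := A 1 1 - μ₀
    set b := A 0 1
    rcases eq_or_lt_of_le hα with hα0 | hα0
    · have h := hq (-(γ+1)*b) (b^2)
      rw [← hα0] at h ⊢
      nlinarith [sq_nonneg b, sq_nonneg (b^2)]
    · have h := hq b (-α)
      nlinarith [h]
  have key := key_pointwise μ₀ (A 0 0 - μ₀) (A 1 1 - μ₀) (A 0 1)
    (t 0 0) (t 0 1) (t 1 1) hμ₀ hα hγ hb
  have hL : 0 ≤ 4 * lam * mu / (lam + 2 * mu) :=
    div_nonneg (by positivity) (by linarith)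
  have hS : 0 ≤ (4 * lam * mu / (lam + 2 * mu)) *
      (A 0 0 * t 0 0 + 2 * A 0 1 * t 0 1 + A 1 1 * t 1 1)^2 :=
    mul_nonneg hL (sq_nonneg _)
  have key4 : 4 * mu * (μ₀^2 * ((t 0 0)^2 + 2*(t 0 1)^2 + (t 1 1)^2)) ≤
      4 * mu * (((μ₀+(A 0 0 - μ₀))*(t 0 0) + (A 0 1)*(t 0 1))^2
        + ((A 0 1)*(t 0 1) + (μ₀+(A 1 1 - μ₀))*(t 1 1))^2
        + 2*((μ₀+(A 0 0 - μ₀))*(t 0 1) + (A 0 1)*(t 1 1))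
          * ((A 0 1)*(t 0 0) + (μ₀+(A 1 1 - μ₀))*(t 0 1))) :=
    mul_le_mul_of_nonneg_left key (by linarith)
  simp only [Fin.sum_univ_two, sq_abs, hAsymm, htsymm]
  nlinarith [key4, hS]
end
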